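/- Let K : ℝ → ℝ be continuous with compact support and ∫ K(v) dv = 0, and let h : ℝ → ℝ be continuously differentiable with bounded derivative, sup_t |h'(t)| ≤ M. Then there exists a constant C > 0 (C = M ∫ |v K(v)| dv) such that for all ε ∈ ℝ and all b > 0, |∫ K((e - ε)/b) h(e) de| ≤ C b². -/

import Mathlib

open MeasureTheory

/-- Second inequality of (6.1) in Lemma 7 (MomderK): for a compactly supported
continuous kernel `K` with vanishing integral and a `C¹` function `h` with
bounded derivative, `|∫ K((e-ε)/b) h(e) de| ≤ C b²`. -/
theorem stmt0 (K h : ℝ → ℝ) (M : ℝ)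
    (hKcont : Continuous K) (hKsupp : HasCompactSupport K)
    (hKint : ∫ v, K v = 0)
    (hh : ContDiff ℝ 1 h) (hh' : ∀ t, |deriv h t| ≤ M) :
    ∃ C > 0, ∀ ε : ℝ, ∀ b : ℝ, 0 < b →
      |∫ e, K ((e - ε) / b) * h e| ≤ C * b ^ 2 := by
  have hM0 : 0 ≤ M := le_trans (abs_nonneg _) (hh' 0)
  have hhdiff : Differentiable ℝ h := hh.differentiable one_ne_zero
  have hhcont : Continuous h := hhdiff.continuous
  have lip : LipschitzWith M.toNNReal h := by
    apply lipschitzWith_of_nnnorm_deriv_le hhdiff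
    intro x
    rw [← NNReal.coe_le_coe, coe_nnnorm, Real.coe_toNNReal _ hM0, Real.norm_eq_abs]
    exact hh' x
  set C0 : ℝ := M * ∫ v, |v * K v| with hC0
  have hI0 : 0 ≤ ∫ v, |v * K v| := integral_nonneg fun v => abs_nonneg _
  have hC0nn : 0 ≤ C0 := mul_nonneg hM0 hI0
  refine ⟨C0 + 1, by linarith, fun ε b hb => ?_⟩
  have hb0 : b ≠ 0 := hb.ne'
  -- integrability facts
  have hvK : Integrable (fun v => |v * K v|) := by
    apply Continuous.integrable_of_hasCompactSupport
    · exact (continuous_id.mul hKcont).abs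
    · exact ((hKsupp.mul_left).abs)
  -- step 1: translate and rescale
  have key : (∫ e, K ((e - ε) / b) * h e) = b * ∫ v, K v * h (b * v + ε) := by
    have h1 : (∫ e, K ((e - ε) / b) * h e) = ∫ e, K (e / b) * h (e + ε) := by
      rw [← integral_add_right_eq_self (fun e => K ((e - ε) / b) * h e) ε]
      simp
    have h2 : (∫ e, K (e / b) * h (e + ε))
        = ∫ x, (fun v => K v * h (b * v + ε)) (x / b) := by
      congr 1
      ext x
      have hx : b * (x / b) = x := by field_simp
      simp only [hx]
    rw [h1, h2, MeasureTheory.Measure.integral_comp_div (fun v => K v * h (b * v + ε)) b,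
      smul_eq_mul, abs_of_pos hb]
  -- step 2: subtract the constant h ε using vanishing moment
  have intKh : Integrable (fun v => K v * h (b * v + ε)) := by
    apply Continuous.integrable_of_hasCompactSupport
    · exact hKcont.mul (by fun_prop)
    · exact hKsupp.mul_right
  have intKc : Integrable (fun v => K v * h ε) :=
    (hKcont.mul continuous_const).integrable_of_hasCompactSupport hKsupp.mul_right
  have key2 : (∫ v, K v * h (b * v + ε)) = ∫ v, K v * (h (b * v + ε) - h ε) := by
    have : (∫ v, K v * (h (b * v + ε) - h ε))
        = (∫ v, K v * h (b * v + ε)) - ∫ v, K v * h ε := by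
      rw [← integral_sub intKh intKc]
      congr 1; ext v; ring
    rw [this, integral_mul_const, hKint, zero_mul, sub_zero]
  -- step 3: bound the integral
  have pointwise : ∀ v, |K v * (h (b * v + ε) - h ε)| ≤ M * b * |v * K v| := by
    intro v
    rw [abs_mul]
    have hd : |h (b * v + ε) - h ε| ≤ M * (b * |v|) := by
      have := lip.dist_le_mul (b * v + ε) ε
      rw [Real.dist_eq, Real.dist_eq, Real.coe_toNNReal _ hM0] at this
      simpa [abs_mul, abs_of_pos hb, mul_assoc] using this
    calc |K v| * |h (b * v + ε) - h ε| ≤ |K v| * (M * (b * |v|)) :=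
          mul_le_mul_of_nonneg_left hd (abs_nonneg _)
      _ = M * b * |v * K v| := by rw [abs_mul]; ring
  have intabs : Integrable (fun v => |K v * (h (b * v + ε) - h ε)|) := by
    apply Continuous.integrable_of_hasCompactSupport
    · exact (hKcont.mul (by fun_prop)).abs
    · exact hKsupp.mul_right.abs
  have bound : |∫ v, K v * (h (b * v + ε) - h ε)| ≤ M * b * ∫ v, |v * K v| := by
    calc |∫ v, K v * (h (b * v + ε) - h ε)|
        ≤ ∫ v, |K v * (h (b * v + ε) - h ε)| := by
          simpa only [Real.norm_eq_abs] using norm_integral_le_integral_norm (μ := volume) (fun v => K v * (h (b * v + ε) - h ε))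
      _ ≤ ∫ v, M * b * |v * K v| := integral_mono intabs (hvK.const_mul _) pointwise
      _ = M * b * ∫ v, |v * K v| := integral_const_mul _ _
  rw [key, key2, abs_mul, abs_of_pos hb]
  calc b * |∫ v, K v * (h (b * v + ε) - h ε)| ≤ b * (M * b * ∫ v, |v * K v|) :=
        mul_le_mul_of_nonneg_left bound hb.le
    _ = C0 * b ^ 2 := by rw [hC0]; ring
    _ ≤ (C0 + 1) * b ^ 2 := by nlinarith [sq_nonneg b]
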